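/- Already the braid operations alone act transitively on trees with N labeled edges: for any two trees T and T' with N labeled edges there is a finite composition of the operations U_1^{±1}, …, U_{N−1}^{±1} (the operation Λ is not needed) taking (the isomorphism class of) T to (the isomorphism class of) T'. In particular every tree with N labeled edges can be taken by such a composition to the 'bush' tree in which all N edges share a common vertex. -/

import Mathlib

open scoped Classical

/-! Trees with `N` labeled edges.

A tree with `N` labeled edges (on `N+1` vertices) is modeled as a map
`ℓ : ZMod N → Sym2 V` (for `V = Fin (N+1)`) assigning to each label an edge
(an unordered pair of vertices), which is injective, has no loop edges, and whose
edges form a tree.  Two such trees are identified when there is a label-preserving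
graph isomorphism, i.e. a permutation of the vertices carrying one edge-labeling
to the other. -/

/-- The operation `Λ` on trees with labeled edges: the underlying tree is unchanged
and all edge labels are shifted cyclically by one, `i ↦ (i+1) mod N`
(so the edge labeled `i` of the new tree is the edge labeled `i-1` of the old one). -/
def treeLam {N : ℕ} {V : Type*} (ℓ : ZMod N → Sym2 V) : ZMod N → Sym2 V :=
  fun i => ℓ (i - 1)

/-- The operation `U_k` on trees with labeled edges: if the edges labeled `k-1` and `k`
have no common vertex, the two labels are exchanged; if the edge labeled `k-1` joins
`A` and `B` and the edge labeled `k` joins `A` and `C`, then the edge `AB` receives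
label `k`, the edge `AC` is deleted, and a new edge `BC` labeled `k-1` is added. -/
noncomputable def treeU {N : ℕ} {V : Type*}
    (k : ZMod N) (ℓ : ZMod N → Sym2 V) : ZMod N → Sym2 V :=
  if h : ∃ a, a ∈ ℓ (k - 1) ∧ a ∈ ℓ k then
    -- the common vertex is `A := h.choose`; `B`, `C` are the other endpoints
    fun i =>
      if i = k - 1 then
        Sym2.mk (Sym2.Mem.other h.choose_spec.1) (Sym2.Mem.other h.choose_spec.2)
      else if i = k then ℓ (k - 1)
      else ℓ i
  else
    fun i =>
      if i = k - 1 then ℓ k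
      else if i = k then ℓ (k - 1)
      else ℓ i

/-- Two edge-labelings are equivalent iff some label-preserving graph isomorphism
(a permutation of the vertices) carries one to the other. -/
def treeEquiv {N : ℕ} {V : Type*} (ℓ ℓ' : ZMod N → Sym2 V) : Prop :=
  ∃ σ : Equiv.Perm V, ∀ i, ℓ' i = Sym2.map σ (ℓ i)

/-- `ℓ` is a tree with `N` labeled edges: the `N` assigned edges are distinct non-loops
and form a (connected, acyclic) tree on the `N+1` vertices. -/
def IsLTree {N : ℕ} (ℓ : ZMod N → Sym2 (Fin (N + 1))) : Prop :=
  Function.Injective ℓ ∧ (∀ i, ¬ (ℓ i).IsDiag) ∧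
    (SimpleGraph.fromEdgeSet (Set.range ℓ)).IsTree

/-- One braid move on trees with labeled edges: apply some `U_k` (`1 ≤ k ≤ N-1`) and pass
to any isomorphic labeled tree. -/
def treeUStep (N : ℕ) (a b : ZMod N → Sym2 (Fin (N + 1))) : Prop :=
  ∃ k : ℕ, 1 ≤ k ∧ k ≤ N - 1 ∧ treeEquiv (treeU (k : ZMod N) a) b

lemma sym2_other_eq {α : Type*} {a b : α} (hne : a ≠ b) (h : a ∈ (s(a, b) : Sym2 α)) :
    Sym2.Mem.other h = b := by
  have := Sym2.other_spec h
  rwa [Sym2.congr_right] at this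

lemma preconn_transfer {V : Type*} {G H : SimpleGraph V} (hG : G.Preconnected)
    (hadj : ∀ x y, G.Adj x y → H.Reachable x y) : H.Preconnected := by
  intro x y
  obtain ⟨w⟩ := hG x y
  induction w with
  | nil => exact SimpleGraph.Reachable.refl _
  | cons h p ih => exact (hadj _ _ h).trans ih

lemma tri_not_acyclic {V : Type*} {G : SimpleGraph V} {x y z : V}
    (hxy : G.Adj x y) (hyz : G.Adj y z) (hxz : G.Adj x z) (hA : G.IsAcyclic) : False := by
  have hxy' := hxy.ne
  have hyz' := hyz.ne
  have hxz' := hxz.ne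
  exact hA (SimpleGraph.Walk.cons hxy (SimpleGraph.Walk.cons hyz
      (SimpleGraph.Walk.cons hxz.symm SimpleGraph.Walk.nil))) (by
    rw [SimpleGraph.Walk.isCycle_def]
    refine ⟨⟨?_⟩, by simp, ?_⟩
    · simp [SimpleGraph.Walk.edges, Sym2.eq_iff]
      aesop
    · simp [SimpleGraph.Walk.support]
      aesop)

lemma isTree_of_connected_of_card {V : Type*} [Fintype V] (G : SimpleGraph V)
    (hc : G.Connected) (hcard : G.edgeSet.ncard + 1 ≤ Fintype.card V) : G.IsTree := by
  classical
  generalize hn : G.edgeSet.ncard = n at hcard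
  induction n using Nat.strong_induction_on generalizing G with
  | _ n ih =>
  by_cases hA : G.IsAcyclic
  · exact ⟨hc, hA⟩
  · exfalso
    rw [SimpleGraph.isAcyclic_iff_forall_edge_isBridge] at hA
    push_neg at hA
    obtain ⟨e, he, hbr⟩ := hA
    obtain ⟨x, y⟩ := e
    have hadjxy : G.Adj x y := he
    rw [SimpleGraph.isBridge_iff] at hbr
    push_neg at hbr
    have hreach : (G \ SimpleGraph.fromEdgeSet {s(x, y)}).Reachable x y := hbr
    set G' := G \ SimpleGraph.fromEdgeSet {s(x, y)} with hG'
    have hconn' : G'.Connected := by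
      have hpre : G'.Preconnected := by
        refine preconn_transfer hc.preconnected ?_
        intro a b hab
        by_cases hchk : s(a, b) = s(x, y)
        · rw [Sym2.eq_iff] at hchk
          rcases hchk with ⟨rfl, rfl⟩ | ⟨rfl, rfl⟩
          · exact hreach
          · exact hreach.symm
        · refine SimpleGraph.Adj.reachable ?_
          refine ⟨hab, ?_⟩
          simp [SimpleGraph.fromEdgeSet_adj, hchk]
      have := hc.nonempty
      exact ⟨hpre⟩
    have hE' : G'.edgeSet = G.edgeSet \ {s(x, y)} := by
      rw [hG', SimpleGraph.edgeSet_sdiff, SimpleGraph.edgeSet_fromEdgeSet]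
      ext e
      simp only [Set.mem_diff, Set.mem_singleton_iff, Set.mem_setOf_eq]
      constructor
      · rintro ⟨h1, h2⟩
        refine ⟨h1, ?_⟩
        intro h3
        exact h2 ⟨h3, fun hd => (SimpleGraph.not_isDiag_of_mem_edgeSet G (h3 ▸ h1)) hd⟩
      · rintro ⟨h1, h2⟩
        exact ⟨h1, fun h3 => h2 h3.1⟩
    have hcard' : G'.edgeSet.ncard = n - 1 := by
      rw [hE', Set.ncard_diff_singleton_of_mem he, hn]
    have hn1 : 1 ≤ n := by
      rw [← hn]
      have : s(x,y) ∈ G.edgeSet := he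
      have := Set.ncard_pos (Set.toFinite G.edgeSet) |>.mpr ⟨_, this⟩
      omega
    have htree' : G'.IsTree := by
      exact ih (n-1) (by omega) G' hconn' hcard' (by omega)
    have := htree'.card_edgeFinset
    rw [SimpleGraph.edgeFinset_card] at this
    have hh : G'.edgeSet.ncard = Fintype.card G'.edgeSet := by
      exact Nat.card_coe_set_eq _ ▸ (Nat.card_eq_fintype_card)
    omega

section Core
variable {N : ℕ}

/-- The "swing" move preserves being a labeled tree: replace the edge `s(s,C)` by
`s(A,C)`, keeping `s(s,A)`, possibly exchanging the two labels involved. -/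
lemma isLTree_swing [NeZero N] {ℓ ℓ'' : ZMod N → Sym2 (Fin (N + 1))}
    {p q : ZMod N} (hpq : p ≠ q) {s A C : Fin (N + 1)}
    (h : IsLTree ℓ) (hp : ℓ p = s(s, A)) (hq : ℓ q = s(s, C))
    (hout : ∀ i, i ≠ p → i ≠ q → ℓ'' i = ℓ i)
    (hvals : (ℓ'' p = s(s, A) ∧ ℓ'' q = s(A, C)) ∨ (ℓ'' p = s(A, C) ∧ ℓ'' q = s(s, A))) :
    IsLTree ℓ'' := by
  obtain ⟨hinj, hnd, htree⟩ := h
  obtain ⟨hconn, hacyc⟩ := htree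
  have hsA : s ≠ A := by intro hh; exact hnd p (by rw [hp, ← hh]; exact Sym2.mk_isDiag_iff.mpr rfl)
  have hsC : s ≠ C := by intro hh; exact hnd q (by rw [hq, ← hh]; exact Sym2.mk_isDiag_iff.mpr rfl)
  have hAC : A ≠ C := by
    intro hh
    apply hpq
    apply hinj
    rw [hp, hq, hh]
  set G := SimpleGraph.fromEdgeSet (Set.range ℓ) with hG
  have hGadj : ∀ x y : Fin (N+1), s(x,y) ∈ Set.range ℓ → x ≠ y → G.Adj x y := by
    intro x y h1 h2; exact (SimpleGraph.fromEdgeSet_adj _).mpr ⟨h1, h2⟩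
  -- the new edge is not an old edge
  have hACnotin : (s(A, C) : Sym2 (Fin (N+1))) ∉ Set.range ℓ := by
    intro hin
    exact tri_not_acyclic (hGadj s A ⟨p, hp⟩ hsA) (hGadj A C hin hAC)
      (hGadj s C ⟨q, hq⟩ hsC) hacyc
  have hsAAC : (s(s, A) : Sym2 (Fin (N+1))) ≠ s(A, C) := by
    intro hh
    rw [Sym2.eq_iff] at hh
    tauto
  have hvp : ℓ'' p = s(s,A) ∨ ℓ'' p = s(A,C) := by tauto
  have hvq : ℓ'' q = s(s,A) ∨ ℓ'' q = s(A,C) := by tauto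
  have hppqq : ℓ'' p ≠ ℓ'' q := by
    rcases hvals with ⟨h1, h2⟩ | ⟨h1, h2⟩ <;> rw [h1, h2]
    · exact hsAAC
    · exact hsAAC.symm
  have key : ∀ i j : ZMod N, (i = p ∨ i = q) → (j ≠ p ∧ j ≠ q) → ℓ'' i ≠ ℓ'' j := by
    rintro i j hi ⟨hj1, hj2⟩ heq
    rw [hout j hj1 hj2] at heq
    have hvi : ℓ'' i = s(s,A) ∨ ℓ'' i = s(A,C) := by rcases hi with rfl | rfl <;> tauto
    rcases hvi with h1 | h1
    · rw [h1] at heq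
      rw [← hp] at heq
      exact (by rcases hi with rfl | rfl; exact hj1 (hinj heq.symm); exact hj1 (hinj heq.symm))
    · rw [h1] at heq
      exact hACnotin ⟨j, heq.symm⟩
  have hinj'' : Function.Injective ℓ'' := by
    have cat : ∀ i : ZMod N, i = p ∨ i = q ∨ (i ≠ p ∧ i ≠ q) := by tauto
    intro i j heq
    rcases cat i with rfl | rfl | hi <;> rcases cat j with rfl | rfl | hj
    · rfl
    · exact absurd heq hppqq
    · exact absurd heq (key _ _ (Or.inl rfl) hj)
    · exact absurd heq.symm hppqq
    · rfl
    · exact absurd heq (key _ _ (Or.inr rfl) hj)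
    · exact absurd heq.symm (key _ _ (Or.inl rfl) hi)
    · exact absurd heq.symm (key _ _ (Or.inr rfl) hi)
    · rw [hout i hi.1 hi.2, hout j hj.1 hj.2] at heq
      exact hinj heq
  have hnd'' : ∀ i, ¬ (ℓ'' i).IsDiag := by
    intro i
    by_cases hip : i = p
    · subst hip
      rcases hvp with h1 | h1 <;> rw [h1] <;> simp [Sym2.mk_isDiag_iff, hsA, hAC]
    by_cases hiq : i = q
    · subst hiq
      rcases hvq with h1 | h1 <;> rw [h1] <;> simp [Sym2.mk_isDiag_iff, hsA, hAC]
    · rw [hout i hip hiq]; exact hnd i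
  refine ⟨hinj'', hnd'', ?_⟩
  set G'' := SimpleGraph.fromEdgeSet (Set.range ℓ'') with hG''
  have hG''adj : ∀ x y : Fin (N+1), s(x,y) ∈ Set.range ℓ'' → x ≠ y → G''.Adj x y := by
    intro x y h1 h2; exact (SimpleGraph.fromEdgeSet_adj _).mpr ⟨h1, h2⟩
  have hsA_in'' : (s(s,A) : Sym2 (Fin (N+1))) ∈ Set.range ℓ'' := by
    rcases hvals with ⟨h1, _⟩ | ⟨_, h2⟩
    · exact ⟨p, h1⟩
    · exact ⟨q, h2⟩
  have hAC_in'' : (s(A,C) : Sym2 (Fin (N+1))) ∈ Set.range ℓ'' := by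
    rcases hvals with ⟨_, h2⟩ | ⟨h1, _⟩
    · exact ⟨q, h2⟩
    · exact ⟨p, h1⟩
  have hconn'' : G''.Connected := by
    have hpre : G''.Preconnected := by
      refine preconn_transfer hconn.preconnected ?_
      intro x y hxy
      obtain ⟨hmem, hne⟩ := (SimpleGraph.fromEdgeSet_adj _).mp hxy
      obtain ⟨i, hi⟩ := hmem
      by_cases hip : i = p
      · subst hip
        rw [hp] at hi
        have : G''.Adj s A := hG''adj s A hsA_in'' hsA
        rw [Sym2.eq_iff] at hi
        rcases hi with ⟨rfl, rfl⟩ | ⟨rfl, rfl⟩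
        · exact this.reachable
        · exact this.symm.reachable
      by_cases hiq : i = q
      · subst hiq
        rw [hq] at hi
        have h1 : G''.Adj s A := hG''adj s A hsA_in'' hsA
        have h2 : G''.Adj A C := hG''adj A C hAC_in'' hAC
        have : G''.Reachable s C := h1.reachable.trans h2.reachable
        rw [Sym2.eq_iff] at hi
        rcases hi with ⟨rfl, rfl⟩ | ⟨rfl, rfl⟩
        · exact this
        · exact this.symm
      · refine SimpleGraph.Adj.reachable (hG''adj x y ⟨i, ?_⟩ hne)
        rw [hout i hip hiq, hi]
    have : Nonempty (Fin (N+1)) := ⟨0⟩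
    exact ⟨hpre⟩
  refine isTree_of_connected_of_card _ hconn'' ?_
  have h1 : G''.edgeSet.ncard ≤ (Set.range ℓ'').ncard := by
    refine Set.ncard_le_ncard ?_ (Set.toFinite _)
    rw [SimpleGraph.edgeSet_fromEdgeSet]
    exact Set.diff_subset
  have h2 : (Set.range ℓ'').ncard ≤ N := by
    rw [← Set.image_univ]
    refine le_trans (Set.ncard_image_le (Set.toFinite _)) ?_
    rw [Set.ncard_univ]
    simp [Nat.card_eq_fintype_card, ZMod.card]
  simp only [Fintype.card_fin]
  omega

end Core

section Moves
variable {N : ℕ}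

/-- The symmetric one-step relation of the theorem. -/
def braidR (N : ℕ) (x y : ZMod N → Sym2 (Fin (N + 1))) : Prop :=
  treeUStep N x y ∨ treeUStep N y x ∨ treeEquiv x y

lemma treeEquiv_refl (ℓ : ZMod N → Sym2 (Fin (N + 1))) : treeEquiv ℓ ℓ := by
  refine ⟨1, fun i => ?_⟩
  simp

lemma treeEquiv_symm {ℓ ℓ' : ZMod N → Sym2 (Fin (N + 1))} (h : treeEquiv ℓ ℓ') :
    treeEquiv ℓ' ℓ := by
  obtain ⟨σ, hσ⟩ := h
  refine ⟨σ⁻¹, fun i => ?_⟩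
  rw [hσ i, Sym2.map_map]
  simp

lemma zmod_natCast_inj {a b : ℕ} (ha : a < N) (hb : b < N) (h : (a : ZMod N) = b) : a = b := by
  rw [← ZMod.val_cast_of_lt ha, ← ZMod.val_cast_of_lt hb, h]

lemma zmod_cast_sub_one {k : ℕ} (hk : 1 ≤ k) : (k : ZMod N) - 1 = ((k - 1 : ℕ) : ZMod N) := by
  have : k = (k - 1) + 1 := by omega
  rw [this]
  push_cast
  ring

lemma other_eq_of {α : Type*} {z : Sym2 α} {a x y : α} (hmem : a ∈ z) (ha : a = x)
    (hz : z = s(x, y)) (hxy : x ≠ y) : Sym2.Mem.other hmem = y := by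
  subst ha
  subst hz
  exact sym2_other_eq hxy hmem

/-- Move A : exchanging labels `k-1`, `k` of two disjoint edges. -/
lemma moveA {k : ℕ} (hk1 : 1 ≤ k) (hk2 : k ≤ N - 1) {ℓ : ZMod N → Sym2 (Fin (N + 1))}
    (h : IsLTree ℓ)
    (hdisj : ∀ a, ¬(a ∈ ℓ ((k - 1 : ℕ) : ZMod N) ∧ a ∈ ℓ (k : ZMod N))) :
    braidR N ℓ (ℓ ∘ Equiv.swap ((k - 1 : ℕ) : ZMod N) (k : ZMod N)) ∧
      IsLTree (ℓ ∘ Equiv.swap ((k - 1 : ℕ) : ZMod N) (k : ZMod N)) := by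
  have hN2 : 2 ≤ N := by omega
  set K1 : ZMod N := ((k - 1 : ℕ) : ZMod N) with hK1
  set K : ZMod N := (k : ZMod N) with hK
  have hKK : K1 ≠ K := by
    intro hh
    have := zmod_natCast_inj (by omega) (by omega) hh
    omega
  constructor
  · left
    refine ⟨k, hk1, hk2, ?_⟩
    have : treeU K ℓ = ℓ ∘ Equiv.swap K1 K := by
      rw [treeU, dif_neg (by rw [zmod_cast_sub_one hk1, ← hK1]; push_neg; exact fun a ha => (hdisj a ⟨ha, ·⟩))]
      funext i
      rw [zmod_cast_sub_one hk1, ← hK1]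
      by_cases h1 : i = K1
      · subst h1
        simp [Equiv.swap_apply_left]
      by_cases h2 : i = K
      · subst h2
        simp [hKK.symm, Equiv.swap_apply_right]
      · simp [h1, h2, Equiv.swap_apply_of_ne_of_ne h1 h2]
    rw [this]
    exact treeEquiv_refl _
  · obtain ⟨hinj, hnd, htree⟩ := h
    refine ⟨hinj.comp (Equiv.swap K1 K).injective, fun i => hnd _, ?_⟩
    have : Set.range (ℓ ∘ Equiv.swap K1 K) = Set.range ℓ := by
      rw [Set.range_comp, Equiv.range_eq_univ, Set.image_univ]
    rw [this]
    exact htree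


lemma shared_choose_other {V : Type*} {z w : Sym2 V} {x b c : V}
    (hz : z = s(x, b)) (hw : w = s(x, c)) (hxb : x ≠ b) (hxc : x ≠ c) (hbc : b ≠ c)
    (he : ∃ a, a ∈ z ∧ a ∈ w) :
    Sym2.Mem.other he.choose_spec.1 = b ∧ Sym2.Mem.other he.choose_spec.2 = c := by
  subst hz
  subst hw
  have h1 := he.choose_spec.1
  have h2 := he.choose_spec.2
  have hch : he.choose = x := by
    rcases Sym2.mem_iff.mp h1 with h | h
    · exact h
    · rcases Sym2.mem_iff.mp h2 with h' | h'
      · exact h'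
      · exact absurd (h.symm.trans h') hbc
  exact ⟨other_eq_of he.choose_spec.1 hch rfl hxb, other_eq_of he.choose_spec.2 hch rfl hxc⟩

/-- Computation of `treeU` when the two edges share the vertex `x`. -/
lemma treeU_shared {V : Type*} {ℓ : ZMod N → Sym2 V} {k : ZMod N} {x b c : V}
    (hB : ℓ (k - 1) = s(x, b)) (hC : ℓ k = s(x, c))
    (hxb : x ≠ b) (hxc : x ≠ c) (hbc : b ≠ c) :
    treeU k ℓ = fun i => if i = k - 1 then s(b, c) else if i = k then s(x, b) else ℓ i := by
  have hex : ∃ a, a ∈ ℓ (k - 1) ∧ a ∈ ℓ k := by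
    rw [hB, hC]
    exact ⟨x, Sym2.mem_mk_left _ _, Sym2.mem_mk_left _ _⟩
  have key := shared_choose_other hB hC hxb hxc hbc hex
  rw [treeU, dif_pos hex]
  funext i
  by_cases h1 : i = k - 1
  · rw [if_pos h1, if_pos h1, key.1, key.2]
  by_cases h2 : i = k
  · rw [if_neg h1, if_neg h1, if_pos h2, if_pos h2, hB]
  · rw [if_neg h1, if_neg h1, if_neg h2, if_neg h2]

/-- Move B (absorb): forward `U_k` when edges `k-1 = s(s,B)` and `k = s(s,C)` share `s`. -/
lemma moveB {k : ℕ} (hk1 : 1 ≤ k) (hk2 : k ≤ N - 1) {ℓ : ZMod N → Sym2 (Fin (N + 1))}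
    (h : IsLTree ℓ) {s B C : Fin (N + 1)}
    (hB : ℓ ((k - 1 : ℕ) : ZMod N) = s(s, B)) (hC : ℓ (k : ZMod N) = s(s, C)) :
    braidR N ℓ (fun i => if i = ((k - 1 : ℕ) : ZMod N) then s(B, C)
        else if i = (k : ZMod N) then s(s, B) else ℓ i) ∧
      IsLTree (fun i => if i = ((k - 1 : ℕ) : ZMod N) then s(B, C)
        else if i = (k : ZMod N) then s(s, B) else ℓ i) := by
  have hN2 : 2 ≤ N := by omega
  haveI : NeZero N := ⟨by omega⟩
  set K1 : ZMod N := ((k - 1 : ℕ) : ZMod N) with hK1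
  set K : ZMod N := (k : ZMod N) with hK
  have hKK : K1 ≠ K := by
    intro hh
    have := zmod_natCast_inj (by omega) (by omega) hh
    omega
  have hsB : s ≠ B := by
    intro hh; exact h.2.1 K1 (by rw [hB, ← hh]; exact Sym2.mk_isDiag_iff.mpr rfl)
  have hsC : s ≠ C := by
    intro hh; exact h.2.1 K (by rw [hC, ← hh]; exact Sym2.mk_isDiag_iff.mpr rfl)
  have hBC : B ≠ C := by
    intro hh
    exact hKK (h.1 (by rw [hB, hC, hh]))
  set ℓ' : ZMod N → Sym2 (Fin (N + 1)) := fun i => if i = K1 then s(B, C)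
      else if i = K then s(s, B) else ℓ i with hℓ'
  have hvp : ℓ' K1 = s(B, C) := if_pos rfl
  have hvq : ℓ' K = s(s, B) := (if_neg (Ne.symm hKK)).trans (if_pos rfl)
  have hLT : IsLTree ℓ' := by
    refine isLTree_swing hKK h hB hC ?_ ?_
    · intro i h1 h2
      exact (if_neg h1).trans (if_neg h2)
    · exact Or.inr ⟨hvp, hvq⟩
  refine ⟨?_, hLT⟩
  left
  refine ⟨k, hk1, hk2, ?_⟩
  have hB' : ℓ (K - 1) = s(s, B) := by rw [zmod_cast_sub_one hk1, ← hK1]; exact hB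
  have hTU : treeU K ℓ = ℓ' := by
    rw [treeU_shared hB' hC hsB hsC hBC]
    funext i
    rw [zmod_cast_sub_one hk1, ← hK1, hℓ']
  rw [hTU]
  exact treeEquiv_refl _

/-- Move C (bring-down): the inverse of `U_k` when edges `k-1 = s(s,B)`, `k = s(s,C)` share
vertex `s`; afterwards the label `k-1` carries the old edge `k`. -/
lemma moveC {k : ℕ} (hk1 : 1 ≤ k) (hk2 : k ≤ N - 1) {ℓ : ZMod N → Sym2 (Fin (N + 1))}
    (h : IsLTree ℓ) {s B C : Fin (N + 1)}
    (hB : ℓ ((k - 1 : ℕ) : ZMod N) = s(s, B)) (hC : ℓ (k : ZMod N) = s(s, C)) :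
    braidR N ℓ (fun i => if i = ((k - 1 : ℕ) : ZMod N) then s(s, C)
        else if i = (k : ZMod N) then s(C, B) else ℓ i) ∧
      IsLTree (fun i => if i = ((k - 1 : ℕ) : ZMod N) then s(s, C)
        else if i = (k : ZMod N) then s(C, B) else ℓ i) := by
  have hN2 : 2 ≤ N := by omega
  haveI : NeZero N := ⟨by omega⟩
  set K1 : ZMod N := ((k - 1 : ℕ) : ZMod N) with hK1
  set K : ZMod N := (k : ZMod N) with hK
  have hKK : K1 ≠ K := by
    intro hh
    have := zmod_natCast_inj (by omega) (by omega) hh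
    omega
  have hsB : s ≠ B := by
    intro hh; exact h.2.1 K1 (by rw [hB, ← hh]; exact Sym2.mk_isDiag_iff.mpr rfl)
  have hsC : s ≠ C := by
    intro hh; exact h.2.1 K (by rw [hC, ← hh]; exact Sym2.mk_isDiag_iff.mpr rfl)
  have hBC : B ≠ C := by
    intro hh
    exact hKK (h.1 (by rw [hB, hC, hh]))
  set ℓ' : ZMod N → Sym2 (Fin (N + 1)) := fun i => if i = K1 then s(s, C)
      else if i = K then s(C, B) else ℓ i with hℓ'
  have hvp : ℓ' K1 = s(s, C) := if_pos rfl
  have hvq : ℓ' K = s(C, B) := (if_neg (Ne.symm hKK)).trans (if_pos rfl)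
  have hLT : IsLTree ℓ' := by
    refine isLTree_swing (p := K) (q := K1) hKK.symm h hC hB ?_ ?_
    · intro i h1 h2
      exact (if_neg h2).trans (if_neg h1)
    · exact Or.inr ⟨hvq, hvp⟩
  refine ⟨?_, hLT⟩
  right; left
  refine ⟨k, hk1, hk2, ?_⟩
  have hz : ℓ' (K - 1) = s(C, s) := by
    rw [zmod_cast_sub_one hk1, ← hK1, hvp, Sym2.eq_swap]
  have hTU : treeU K ℓ' = ℓ := by
    rw [treeU_shared hz hvq hsC.symm (fun hh => hBC hh.symm) hsB]
    funext i
    by_cases h1 : i = K - 1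
    · rw [if_pos h1, h1, zmod_cast_sub_one hk1, ← hK1, hB]
    by_cases h2 : i = K
    · rw [if_neg h1, if_pos h2, h2, hC, Sym2.eq_swap]
    · have h1' : i ≠ K1 := by rwa [hK1, ← zmod_cast_sub_one hk1]
      rw [if_neg h1, if_neg h2]
      exact (if_neg h1').trans (if_neg h2)
  rw [hTU]
  exact treeEquiv_refl _

end Moves

section Algo
variable {N : ℕ}

lemma natCast_ne {a b : ℕ} (ha : a < N) (hb : b < N) (h : a ≠ b) :
    (a : ZMod N) ≠ (b : ZMod N) := fun hh => h (zmod_natCast_inj ha hb hh)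

lemma cross_edge {V : Type*} {G : SimpleGraph V} {S : Set V} :
    ∀ {v t : V}, G.Walk v t → t ∉ S → v ∈ S → ∃ x y, G.Adj x y ∧ x ∈ S ∧ y ∉ S := by
  intro v t w
  induction w with
  | nil => intro ht hv; exact absurd hv ht
  | @cons a b c h p ih =>
    intro ht hv
    by_cases hb : b ∈ S
    · exact ih ht hb
    · exact ⟨a, b, h, hv, hb⟩

/-- Bring the edge at label `j+d` down to label `j`, not touching labels `< j`. -/
lemma bringDown {j : ℕ} (hj : 1 ≤ j) {w u : Fin (N + 1)} :
    ∀ (d : ℕ) (ℓc : ZMod N → Sym2 (Fin (N + 1))), IsLTree ℓc → j + d ≤ N - 1 →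
      ℓc ((j + d : ℕ) : ZMod N) = s(w, u) →
      ∃ ℓd, IsLTree ℓd ∧ (∀ i : ℕ, i < j → ℓd (i : ZMod N) = ℓc (i : ZMod N)) ∧
        ℓd ((j : ℕ) : ZMod N) = s(w, u) ∧ Relation.ReflTransGen (braidR N) ℓc ℓd := by
  intro d
  induction d with
  | zero =>
    intro ℓc hlt _ he
    exact ⟨ℓc, hlt, fun i _ => rfl, he, Relation.ReflTransGen.refl⟩
  | succ d ih =>
    intro ℓc hlt hdN he
    have hN2 : 2 ≤ N := by omega
    have hk1 : 1 ≤ j + d + 1 := by omega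
    have hk2 : j + d + 1 ≤ N - 1 := by omega
    have he' : ℓc ((j + d + 1 : ℕ) : ZMod N) = s(w, u) := he
    by_cases hsh : ∃ a, a ∈ ℓc ((j + d : ℕ) : ZMod N) ∧ a ∈ ℓc ((j + d + 1 : ℕ) : ZMod N)
    · -- shared vertex: use move C
      obtain ⟨a, ha1, ha2⟩ := hsh
      have hB : ℓc ((j + d : ℕ) : ZMod N) = s(a, Sym2.Mem.other ha1) := (Sym2.other_spec ha1).symm
      have hC : ℓc ((j + d + 1 : ℕ) : ZMod N) = s(a, Sym2.Mem.other ha2) :=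
        (Sym2.other_spec ha2).symm
      obtain ⟨hstep0, hlt0⟩ := moveC (k := j + d + 1) hk1 hk2 hlt hB hC
      have hstep : braidR N ℓc (fun i =>
          if i = ((j + d : ℕ) : ZMod N) then s(a, Sym2.Mem.other ha2)
          else if i = ((j + d + 1 : ℕ) : ZMod N) then s(Sym2.Mem.other ha2, Sym2.Mem.other ha1)
          else ℓc i) := hstep0
      have hlt1 : IsLTree (fun i =>
          if i = ((j + d : ℕ) : ZMod N) then s(a, Sym2.Mem.other ha2)
          else if i = ((j + d + 1 : ℕ) : ZMod N) then s(Sym2.Mem.other ha2, Sym2.Mem.other ha1)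
          else ℓc i) := hlt0
      have hv1 : (fun i =>
          if i = ((j + d : ℕ) : ZMod N) then s(a, Sym2.Mem.other ha2)
          else if i = ((j + d + 1 : ℕ) : ZMod N) then s(Sym2.Mem.other ha2, Sym2.Mem.other ha1)
          else ℓc i) ((j + d : ℕ) : ZMod N) = s(w, u) :=
        (if_pos rfl).trans (hC.symm.trans he')
      obtain ⟨ℓd, hltd, hlowd, hed, hrtg⟩ := ih _ hlt1 (by omega) hv1
      refine ⟨ℓd, hltd, fun i hi => (hlowd i hi).trans ?_, hed,
        Relation.ReflTransGen.head hstep hrtg⟩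
      exact (if_neg (natCast_ne (by omega) (by omega) (by omega))).trans
        (if_neg (natCast_ne (by omega) (by omega) (by omega)))
    · -- disjoint: swap
      push_neg at hsh
      obtain ⟨hstep0, hlt0⟩ := moveA (k := j + d + 1) hk1 hk2 hlt (fun a ha => hsh a ha.1 ha.2)
      have hstep : braidR N ℓc
          (ℓc ∘ Equiv.swap ((j + d : ℕ) : ZMod N) ((j + d + 1 : ℕ) : ZMod N)) := hstep0
      have hlt1 : IsLTree
          (ℓc ∘ Equiv.swap ((j + d : ℕ) : ZMod N) ((j + d + 1 : ℕ) : ZMod N)) := hlt0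
      have hv1 : (ℓc ∘ Equiv.swap ((j + d : ℕ) : ZMod N) ((j + d + 1 : ℕ) : ZMod N))
          ((j + d : ℕ) : ZMod N) = s(w, u) := by
        rw [Function.comp_apply, Equiv.swap_apply_left, he']
      obtain ⟨ℓd, hltd, hlowd, hed, hrtg⟩ := ih _ hlt1 (by omega) hv1
      refine ⟨ℓd, hltd, fun i hi => (hlowd i hi).trans ?_, hed,
        Relation.ReflTransGen.head hstep hrtg⟩
      rw [Function.comp_apply, Equiv.swap_apply_of_ne_of_ne
        (natCast_ne (by omega) (by omega) (by omega))
        (natCast_ne (by omega) (by omega) (by omega))]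

/-- Swap the pendant edge `s(w,u)` down past bush edges and absorb it into the bush. -/
lemma swapDown {j i1 : ℕ} (hi1 : i1 < j) (hjN : j ≤ N - 1)
    {v w u : Fin (N + 1)} (hvw : v ≠ w) (hvu : v ≠ u) (hwu : w ≠ u) :
    ∀ (d : ℕ) (ℓc : ZMod N → Sym2 (Fin (N + 1))), IsLTree ℓc →
      i1 + 1 + d ≤ j →
      ℓc ((i1 : ℕ) : ZMod N) = s(v, w) →
      ℓc ((i1 + 1 + d : ℕ) : ZMod N) = s(w, u) →
      (∀ i : ℕ, i ≤ j → i ≠ i1 + 1 + d → v ∈ ℓc (i : ZMod N)) →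
      (∀ i : ℕ, i ≤ j → i ≠ i1 + 1 + d → u ∉ ℓc (i : ZMod N)) →
      ∃ ℓe, IsLTree ℓe ∧ (∀ i : ℕ, i ≤ j → v ∈ ℓe (i : ZMod N)) ∧
        Relation.ReflTransGen (braidR N) ℓc ℓe := by
  have hN2 : 2 ≤ N := by omega
  intro d
  induction d with
  | zero =>
    intro ℓc hlt hpos hvw1 he hvin huout
    have hk1 : 1 ≤ i1 + 1 := by omega
    have hk2 : i1 + 1 ≤ N - 1 := by omega
    have hB : ℓc ((i1 : ℕ) : ZMod N) = s(w, v) := by rw [hvw1, Sym2.eq_swap]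
    have hC : ℓc ((i1 + 1 : ℕ) : ZMod N) = s(w, u) := he
    obtain ⟨hstep0, hlt0⟩ := moveB (k := i1 + 1) hk1 hk2 hlt hB hC
    have hstep : braidR N ℓc (fun i =>
        if i = ((i1 : ℕ) : ZMod N) then s(v, u)
        else if i = ((i1 + 1 : ℕ) : ZMod N) then s(w, v) else ℓc i) := hstep0
    have hlt1 : IsLTree (fun i =>
        if i = ((i1 : ℕ) : ZMod N) then s(v, u)
        else if i = ((i1 + 1 : ℕ) : ZMod N) then s(w, v) else ℓc i) := hlt0
    refine ⟨_, hlt1, ?_, Relation.ReflTransGen.single hstep⟩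
    intro i hij
    show v ∈ (if (i : ZMod N) = ((i1 : ℕ) : ZMod N) then s(v, u)
      else if (i : ZMod N) = ((i1 + 1 : ℕ) : ZMod N) then s(w, v) else ℓc (i : ZMod N))
    by_cases h1 : (i : ZMod N) = ((i1 : ℕ) : ZMod N)
    · rw [if_pos h1]
      exact Sym2.mem_mk_left _ _
    by_cases h2 : (i : ZMod N) = ((i1 + 1 : ℕ) : ZMod N)
    · rw [if_neg h1, if_pos h2]
      exact Sym2.mem_mk_right _ _
    · rw [if_neg h1, if_neg h2]
      refine hvin i hij (fun hh => h2 ?_)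
      rw [hh]
  | succ d ih =>
    intro ℓc hlt hpos hvw1 he hvin huout
    have hk1 : 1 ≤ i1 + 1 + d + 1 := by omega
    have hk2 : i1 + 1 + d + 1 ≤ N - 1 := by omega
    have he' : ℓc ((i1 + 1 + d + 1 : ℕ) : ZMod N) = s(w, u) := he
    have hvz : v ∈ ℓc ((i1 + 1 + d : ℕ) : ZMod N) := hvin (i1 + 1 + d) (by omega) (by omega)
    have hez : ℓc ((i1 + 1 + d : ℕ) : ZMod N) = s(v, Sym2.Mem.other hvz) :=
      (Sym2.other_spec hvz).symm
    have hzu : Sym2.Mem.other hvz ≠ u := by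
      intro hh
      exact huout (i1 + 1 + d) (by omega) (by omega) (hh ▸ Sym2.other_mem hvz)
    have hzw : Sym2.Mem.other hvz ≠ w := by
      intro hh
      have h0 : ℓc ((i1 + 1 + d : ℕ) : ZMod N) = ℓc ((i1 : ℕ) : ZMod N) := by
        rw [hez, hvw1, hh]
      have := zmod_natCast_inj (by omega) (by omega) (hlt.1 h0)
      omega
    have hdisj : ∀ a, ¬(a ∈ ℓc ((i1 + 1 + d : ℕ) : ZMod N) ∧
        a ∈ ℓc ((i1 + 1 + d + 1 : ℕ) : ZMod N)) := by
      rintro a ⟨ha1, ha2⟩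
      rw [hez, Sym2.mem_iff] at ha1
      rw [he', Sym2.mem_iff] at ha2
      rcases ha1 with rfl | rfl <;> rcases ha2 with hh | hh
      · exact hvw hh
      · exact hvu hh
      · exact hzw hh
      · exact hzu hh
    obtain ⟨hstep0, hlt0⟩ := moveA (k := i1 + 1 + d + 1) hk1 hk2 hlt hdisj
    have hstep : braidR N ℓc
        (ℓc ∘ Equiv.swap ((i1 + 1 + d : ℕ) : ZMod N) ((i1 + 1 + d + 1 : ℕ) : ZMod N)) := hstep0
    have hlt1 : IsLTree
        (ℓc ∘ Equiv.swap ((i1 + 1 + d : ℕ) : ZMod N) ((i1 + 1 + d + 1 : ℕ) : ZMod N)) := hlt0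
    set ℓ1 := ℓc ∘ Equiv.swap ((i1 + 1 + d : ℕ) : ZMod N) ((i1 + 1 + d + 1 : ℕ) : ZMod N)
      with hℓ1
    have hswap1 : ℓ1 ((i1 + 1 + d : ℕ) : ZMod N) = s(w, u) := by
      rw [hℓ1, Function.comp_apply, Equiv.swap_apply_left, he']
    have hswap2 : ℓ1 ((i1 + 1 + d + 1 : ℕ) : ZMod N) = s(v, Sym2.Mem.other hvz) := by
      rw [hℓ1, Function.comp_apply, Equiv.swap_apply_right]
      exact hez
    have hother : ∀ i : ℕ, i ≤ j → i ≠ i1 + 1 + d → i ≠ i1 + 1 + d + 1 →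
        ℓ1 (i : ZMod N) = ℓc (i : ZMod N) := by
      intro i hij hne1 hne2
      rw [hℓ1, Function.comp_apply, Equiv.swap_apply_of_ne_of_ne
        (natCast_ne (by omega) (by omega) hne1)
        (natCast_ne (by omega) (by omega) hne2)]
    have hvw1' : ℓ1 ((i1 : ℕ) : ZMod N) = s(v, w) := by
      rw [hother i1 (by omega) (by omega) (by omega)]
      exact hvw1
    have hvin1 : ∀ i : ℕ, i ≤ j → i ≠ i1 + 1 + d → v ∈ ℓ1 (i : ZMod N) := by
      intro i hij hne
      by_cases hik : i = i1 + 1 + d + 1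
      · rw [hik, hswap2]
        exact Sym2.mem_mk_left _ _
      · rw [hother i hij hne hik]
        exact hvin i hij (by omega)
    have huout1 : ∀ i : ℕ, i ≤ j → i ≠ i1 + 1 + d → u ∉ ℓ1 (i : ZMod N) := by
      intro i hij hne
      by_cases hik : i = i1 + 1 + d + 1
      · rw [hik, hswap2, Sym2.mem_iff]
        rintro (hh | hh)
        · exact hvu hh.symm
        · exact hzu hh.symm
      · rw [hother i hij hne hik]
        exact huout i hij (by omega)
    obtain ⟨ℓe, hlte, hvine, hrtg⟩ := ih ℓ1 hlt1 (by omega) hvw1' hswap1 hvin1 huout1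
    exact ⟨ℓe, hlte, hvine, Relation.ReflTransGen.head hstep hrtg⟩

end Algo

section Final
variable {N : ℕ}

lemma stepBush {j : ℕ} (hj1 : 1 ≤ j) (hjN : j ≤ N - 1) {v : Fin (N + 1)}
    (ℓ' : ZMod N → Sym2 (Fin (N + 1))) (hlt : IsLTree ℓ')
    (hbush : ∀ i : ℕ, i < j → v ∈ ℓ' (i : ZMod N)) :
    ∃ ℓ2, IsLTree ℓ2 ∧ (∀ i : ℕ, i < j + 1 → v ∈ ℓ2 (i : ZMod N)) ∧
      Relation.ReflTransGen (braidR N) ℓ' ℓ2 := by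
  have hN2 : 2 ≤ N := by omega
  haveI : NeZero N := ⟨by omega⟩
  let g : Fin (j + 1) → Fin (N + 1) :=
    Fin.cases v (fun b => Sym2.Mem.other (hbush b.1 b.2))
  have hg0 : g 0 = v := rfl
  have hgs : ∀ b : Fin j, g b.succ = Sym2.Mem.other (hbush b.1 b.2) := fun b => by
    simp [g]
  have hOther : ∀ b : Fin j, ℓ' ((b.1 : ℕ) : ZMod N) = s(v, g b.succ) := fun b => by
    rw [hgs b]
    exact (Sym2.other_spec (hbush b.1 b.2)).symm
  have hnsurj : ¬Function.Surjective g := by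
    intro hs
    have := Fintype.card_le_of_surjective g hs
    simp only [Fintype.card_fin] at this
    omega
  obtain ⟨t, htS⟩ : ∃ t, t ∉ Set.range g := by
    by_contra hcon
    push_neg at hcon
    exact hnsurj fun y => hcon y
  have hvS : v ∈ Set.range g := ⟨0, hg0⟩
  obtain ⟨hcon, hacyc⟩ := hlt.2.2
  obtain ⟨p⟩ := hcon.preconnected v t
  obtain ⟨x, y, hadj, hxS, hyS⟩ := cross_edge p htS hvS
  obtain ⟨hmem, hxy⟩ := (SimpleGraph.fromEdgeSet_adj _).mp hadj
  obtain ⟨i0, hi0⟩ := hmem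
  have hmlt : i0.val < N := ZMod.val_lt i0
  have hcastid : ((i0.val : ℕ) : ZMod N) = i0 := ZMod.natCast_rightInverse i0
  have hi0' : ℓ' ((i0.val : ℕ) : ZMod N) = s(x, y) := by rw [hcastid]; exact hi0
  have hvy : v ≠ y := fun hh => hyS (hh ▸ hvS)
  have hmj : j ≤ i0.val := by
    by_contra hlt2
    push_neg at hlt2
    have hy : y ∈ ℓ' ((i0.val : ℕ) : ZMod N) := by
      rw [hi0']; exact Sym2.mem_mk_right _ _
    rw [hOther ⟨i0.val, hlt2⟩, Sym2.mem_iff] at hy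
    rcases hy with hh | hh
    · exact hvy hh.symm
    · exact hyS ⟨(⟨i0.val, hlt2⟩ : Fin j).succ, hh.symm⟩
  have hjd : ((j + (i0.val - j) : ℕ) : ZMod N) = ((i0.val : ℕ) : ZMod N) := by
    congr 1
    omega
  obtain ⟨ℓd, hltd, hlowd, hed, hrtg1⟩ := bringDown hj1 (i0.val - j) ℓ' hlt (by omega)
    (by rw [hjd]; exact hi0')
  obtain ⟨a, ha⟩ := hxS
  rcases Fin.eq_zero_or_eq_succ a with rfl | ⟨b, rfl⟩
  · -- the crossing edge already contains v
    rw [hg0] at ha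
    refine ⟨ℓd, hltd, ?_, hrtg1⟩
    intro i hi
    by_cases hij : i < j
    · rw [hlowd i hij]; exact hbush i hij
    · have : i = j := by omega
      subst this
      rw [hed, ← ha]
      exact Sym2.mem_mk_left _ _
  · -- the crossing edge hangs at the bush vertex `x = g b.succ`
    have hvw1 : ℓ' ((b.1 : ℕ) : ZMod N) = s(v, x) := by rw [hOther b, ha]
    have hvx : v ≠ x := by
      intro hh
      exact hlt.2.1 _ (by rw [hvw1, ← hh]; exact Sym2.mk_isDiag_iff.mpr rfl)
    have hvw1d : ℓd ((b.1 : ℕ) : ZMod N) = s(v, x) := by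
      rw [hlowd b.1 b.2]; exact hvw1
    have hE : b.1 + 1 + (j - b.1 - 1) = j := by have := b.2; omega
    have hvind : ∀ i : ℕ, i ≤ j → i ≠ b.1 + 1 + (j - b.1 - 1) → v ∈ ℓd (i : ZMod N) := by
      intro i hij hne
      rw [hE] at hne
      have hij' : i < j := by omega
      rw [hlowd i hij']
      exact hbush i hij'
    have huoutd : ∀ i : ℕ, i ≤ j → i ≠ b.1 + 1 + (j - b.1 - 1) → y ∉ ℓd (i : ZMod N) := by
      intro i hij hne
      rw [hE] at hne
      have hij' : i < j := by omega
      rw [hlowd i hij', hOther ⟨i, hij'⟩, Sym2.mem_iff]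
      rintro (hh | hh)
      · exact hvy hh.symm
      · exact hyS ⟨(⟨i, hij'⟩ : Fin j).succ, hh.symm⟩
    obtain ⟨ℓe, hlte, hvine, hrtg2⟩ := swapDown b.2 hjN hvx hvy hxy (j - b.1 - 1) ℓd hltd
      (by omega) hvw1d (by rw [show ((b.1 + 1 + (j - b.1 - 1) : ℕ) : ZMod N) = ((j : ℕ) : ZMod N) by rw [hE]]; exact hed)
      hvind huoutd
    exact ⟨ℓe, hlte, fun i hi => hvine i (by omega), hrtg1.trans hrtg2⟩

lemma toBush (hN : 1 ≤ N) (ℓ : ZMod N → Sym2 (Fin (N + 1))) (hlt : IsLTree ℓ) :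
    ∃ c v, IsLTree c ∧ (∀ i, v ∈ c i) ∧ Relation.ReflTransGen (braidR N) ℓ c := by
  haveI : NeZero N := ⟨by omega⟩
  have hex : ∀ z : Sym2 (Fin (N + 1)), ∃ a, a ∈ z :=
    fun z => Sym2.ind (fun x y => ⟨x, Sym2.mem_mk_left x y⟩) z
  obtain ⟨v, hv⟩ := hex (ℓ (0 : ZMod N))
  have main : ∀ d j, 1 ≤ j → j + d = N → ∀ ℓ', IsLTree ℓ' →
      (∀ i : ℕ, i < j → v ∈ ℓ' (i : ZMod N)) → Relation.ReflTransGen (braidR N) ℓ ℓ' →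
      ∃ c, IsLTree c ∧ (∀ i : ℕ, i < N → v ∈ c (i : ZMod N)) ∧
        Relation.ReflTransGen (braidR N) ℓ c := by
    intro d
    induction d with
    | zero =>
      intro j hj1 hjN ℓ' h1 h2 h3
      exact ⟨ℓ', h1, fun i hi => h2 i (by omega), h3⟩
    | succ d ih =>
      intro j hj1 hjN ℓ' h1 h2 h3
      obtain ⟨ℓ2, g1, g2, g3⟩ := stepBush hj1 (by omega) ℓ' h1 h2
      exact ih (j + 1) (by omega) (by omega) ℓ2 g1 g2 (h3.trans g3)
  obtain ⟨c, hc, hvc, hrtg⟩ := main (N - 1) 1 le_rfl (by omega) ℓ hlt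
    (by
      intro i hi
      have : i = 0 := by omega
      subst this
      rw [Nat.cast_zero]
      exact hv)
    Relation.ReflTransGen.refl
  refine ⟨c, v, hc, fun i => ?_, hrtg⟩
  have := hvc i.val (ZMod.val_lt i)
  rwa [(ZMod.natCast_rightInverse i : ((i.val : ℕ) : ZMod N) = i)] at this

lemma bushEquiv (hN : 1 ≤ N) {c c' : ZMod N → Sym2 (Fin (N + 1))}
    (hc : IsLTree c) (hc' : IsLTree c') {v v' : Fin (N + 1)}
    (hv : ∀ i, v ∈ c i) (hv' : ∀ i, v' ∈ c' i) : treeEquiv c c' := by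
  haveI : NeZero N := ⟨by omega⟩
  have hcastid : ∀ i : ZMod N, ((i.val : ℕ) : ZMod N) = i := fun i => ZMod.natCast_rightInverse i
  have build : ∀ (cc : ZMod N → Sym2 (Fin (N + 1))), IsLTree cc → ∀ (vv : Fin (N + 1)),
      (∀ i, vv ∈ cc i) → ∃ g : Fin (N + 1) → Fin (N + 1), Function.Bijective g ∧ g 0 = vv ∧
      ∀ b : Fin N, cc ((b.1 : ℕ) : ZMod N) = s(vv, g b.succ) := by
    intro cc hcc vv hvv
    let x : Fin N → Fin (N + 1) := fun b => Sym2.Mem.other (hvv ((b.1 : ℕ) : ZMod N))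
    have hx : ∀ b : Fin N, cc ((b.1 : ℕ) : ZMod N) = s(vv, x b) :=
      fun b => (Sym2.other_spec _).symm
    have hxv : ∀ b, x b ≠ vv := by
      intro b hh
      exact hcc.2.1 _ (by rw [hx b, hh]; exact Sym2.mk_isDiag_iff.mpr rfl)
    let g : Fin (N + 1) → Fin (N + 1) := Fin.cases vv x
    have hg0 : g 0 = vv := rfl
    have hgs : ∀ b : Fin N, g b.succ = x b := fun b => by simp [g]
    have hginj : Function.Injective g := by
      intro a1 a2 heq
      rcases Fin.eq_zero_or_eq_succ a1 with rfl | ⟨b1, rfl⟩ <;>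
        rcases Fin.eq_zero_or_eq_succ a2 with rfl | ⟨b2, rfl⟩
      · rfl
      · rw [hg0, hgs b2] at heq
        exact absurd heq.symm (hxv b2)
      · rw [hg0, hgs b1] at heq
        exact absurd heq (hxv b1)
      · rw [hgs b1, hgs b2] at heq
        have : cc ((b1.1 : ℕ) : ZMod N) = cc ((b2.1 : ℕ) : ZMod N) := by
          rw [hx b1, hx b2, heq]
        have := zmod_natCast_inj b1.2 b2.2 (hcc.1 this)
        exact congrArg Fin.succ (Fin.val_injective this)
    exact ⟨g, (Finite.injective_iff_bijective).mp hginj, hg0, fun b => by rw [hgs b]; exact hx b⟩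
  obtain ⟨g, hg, hg0, hgs⟩ := build c hc v hv
  obtain ⟨g', hg', hg0', hgs'⟩ := build c' hc' v' hv'
  let e := Equiv.ofBijective g hg
  let e' := Equiv.ofBijective g' hg'
  refine ⟨e.symm.trans e', fun i => ?_⟩
  let b : Fin N := ⟨i.val, ZMod.val_lt i⟩
  have hib : ((b.1 : ℕ) : ZMod N) = i := hcastid i
  have h1 : c i = s(v, g b.succ) := by rw [← hib]; exact hgs b
  have h2 : c' i = s(v', g' b.succ) := by rw [← hib]; exact hgs' b
  rw [h1, h2, Sym2.map_pair_eq]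
  have hsv : (e.symm.trans e') v = v' := by
    have : e.symm v = 0 := by
      rw [Equiv.symm_apply_eq]
      exact hg0.symm
    simp only [Equiv.trans_apply, this]
    exact hg0'
  have hsx : (e.symm.trans e') (g b.succ) = g' b.succ := by
    have : e.symm (g b.succ) = b.succ := by
      rw [Equiv.symm_apply_eq]
      rfl
    simp only [Equiv.trans_apply, this]
    rfl
  rw [hsv, hsx]

lemma braidR_symm {x y : ZMod N → Sym2 (Fin (N + 1))} (h : braidR N x y) : braidR N y x := by
  rcases h with h | h | h
  · exact Or.inr (Or.inl h)
  · exact Or.inl h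
  · exact Or.inr (Or.inr (treeEquiv_symm h))

lemma rtg_symm {x y : ZMod N → Sym2 (Fin (N + 1))}
    (h : Relation.ReflTransGen (braidR N) x y) : Relation.ReflTransGen (braidR N) y x := by
  induction h with
  | refl => exact Relation.ReflTransGen.refl
  | tail h1 h2 ih => exact Relation.ReflTransGen.head (braidR_symm h2) ih

end Final


/-- already the braid operations `U_1^{±1}, …, U_{N-1}^{±1}` alone (without `Λ`)
act transitively on isomorphism classes of trees with `N` labeled edges; in particular every
tree with `N` labeled edges can be taken by such a composition to the "bush" tree in which
all `N` edges share a common vertex. -/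
theorem stmt_6 (N : ℕ) (hN : 1 ≤ N) (a b : ZMod N → Sym2 (Fin (N + 1)))
    (ha : IsLTree a) (hb : IsLTree b) :
    Relation.ReflTransGen
      (fun x y => treeUStep N x y ∨ treeUStep N y x ∨ treeEquiv x y) a b ∧
    ∃ c : ZMod N → Sym2 (Fin (N + 1)), IsLTree c ∧ (∃ v : Fin (N + 1), ∀ i, v ∈ c i) ∧
      Relation.ReflTransGen
        (fun x y => treeUStep N x y ∨ treeUStep N y x ∨ treeEquiv x y) a c := by

  obtain ⟨c, v, hc, hvc, hac⟩ := toBush hN a ha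
  obtain ⟨c', v', hc', hvc', hbc⟩ := toBush hN b hb
  have hequiv : treeEquiv c c' := bushEquiv hN hc hc' hvc hvc'
  have hcb : Relation.ReflTransGen (braidR N) c b :=
    Relation.ReflTransGen.head (Or.inr (Or.inr hequiv)) (rtg_symm hbc)
  exact ⟨hac.trans hcb, c, hc, ⟨v, hvc⟩, hac⟩
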